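/- arXiv:1712.04264 — 3 statements merged into one kernel-verified Lean document; each statement's English description precedes it below -/
import Mathlib

section
/- Let α, β be strings of length k over an alphabet of size s ≥ 2 with d(α,β) = k (they differ in every position). Then the number of strings γ of length k with d(α,γ) = i and d(β,γ) = j is (s-2)^{i+j-k} · C(k, i+j-k) · C(2k-i-j, k-j) when k ≤ i+j, i ≤ k, and j ≤ k (with the convention that this count is 0 if i+j < k). -/
theorem count_intersection_complementary_strings
    {k : ℕ} {A : Type*} [Fintype A] [DecidableEq A]
    (hs : 2 ≤ Fintype.card A) (α β : Fin k → A) (hab : hammingDist α β = k)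
    (i j : ℕ) (hi : i ≤ k) (hj : j ≤ k) :
    (k ≤ i + j →
      (Finset.univ.filter
          (fun γ : Fin k → A => hammingDist α γ = i ∧ hammingDist β γ = j)).card =
        (Fintype.card A - 2) ^ (i + j - k) * Nat.choose k (i + j - k) *
          Nat.choose (2 * k - i - j) (k - j)) ∧
    (i + j < k →
      (Finset.univ.filter
          (fun γ : Fin k → A => hammingDist α γ = i ∧ hammingDist β γ = j)).card = 0) := by
  classical
  have hne : ∀ x, α x ≠ β x := by
    intro x
    have h1 : (Finset.univ.filter fun x => α x ≠ β x) = Finset.univ :=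
      Finset.eq_univ_of_card _ (by simpa [Fintype.card_fin, hammingDist] using hab)
    have hx := Finset.mem_filter.mp (h1 ▸ Finset.mem_univ x)
    exact hx.2
  have key : ∀ γ : Fin k → A, hammingDist α γ = i → hammingDist β γ = j → k ≤ i + j := by
    intro γ h1 h2
    have hcover : (Finset.univ : Finset (Fin k)) ⊆
        (Finset.univ.filter fun x => α x ≠ γ x) ∪ (Finset.univ.filter fun x => β x ≠ γ x) := by
      intro x _
      by_cases h : α x ≠ γ x
      · exact Finset.mem_union_left _ (Finset.mem_filter.mpr ⟨Finset.mem_univ x, h⟩)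
      · push_neg at h
        refine Finset.mem_union_right _ (Finset.mem_filter.mpr ⟨Finset.mem_univ x, ?_⟩)
        rw [← h]; exact (hne x).symm
    have hc := Finset.card_le_card hcover
    have hle := Finset.card_union_le (Finset.univ.filter fun x => α x ≠ γ x)
      (Finset.univ.filter fun x => β x ≠ γ x)
    simp only [Finset.card_univ, Fintype.card_fin] at hc
    have e1 : (Finset.univ.filter fun x => α x ≠ γ x).card = i := h1
    have e2 : (Finset.univ.filter fun x => β x ≠ γ x).card = j := h2
    omega
  constructor
  · intro hk
    set c := i + j - k with hc
    set b := k - j with hb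
    set T : Finset (Σ _ : Finset (Fin k), Finset (Fin k)) :=
      (Finset.univ.powersetCard c).sigma (fun C => Cᶜ.powersetCard b) with hT
    set f : (Fin k → A) → (Σ _ : Finset (Fin k), Finset (Fin k)) :=
      fun γ => ⟨Finset.univ.filter fun x => γ x ≠ α x ∧ γ x ≠ β x,
                Finset.univ.filter fun x => γ x = β x⟩ with hf
    set S := Finset.univ.filter
      (fun γ : Fin k → A => hammingDist α γ = i ∧ hammingDist β γ = j) with hS
    have hmem : ∀ γ ∈ S, f γ ∈ T := by
      intro γ hγ
      rw [hS, Finset.mem_filter] at hγ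
      obtain ⟨-, h1, h2⟩ := hγ
      have e1 : (Finset.univ.filter fun x => γ x ≠ α x).card = i := by
        rw [← h1, hammingDist]; congr 1; ext x; simp [ne_comm]
      have e2 : (Finset.univ.filter fun x => γ x ≠ β x).card = j := by
        rw [← h2, hammingDist]; congr 1; ext x; simp [ne_comm]
      have hun : (Finset.univ.filter fun x => γ x ≠ α x) ∪
          (Finset.univ.filter fun x => γ x ≠ β x) = Finset.univ := by
        ext x
        simp only [Finset.mem_union, Finset.mem_filter, Finset.mem_univ, true_and, iff_true]
        by_cases h : γ x = α x
        · right; rw [h]; exact hne x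
        · left; exact h
      have hinter : (Finset.univ.filter fun x => γ x ≠ α x) ∩
          (Finset.univ.filter fun x => γ x ≠ β x) =
          Finset.univ.filter fun x => γ x ≠ α x ∧ γ x ≠ β x := by
        rw [Finset.filter_and]
      have hcard := Finset.card_inter_add_card_union
        (Finset.univ.filter fun x => γ x ≠ α x) (Finset.univ.filter fun x => γ x ≠ β x)
      rw [hinter, hun, e1, e2, Finset.card_univ, Fintype.card_fin] at hcard
      have hCcard : (Finset.univ.filter fun x => γ x ≠ α x ∧ γ x ≠ β x).card = c := by omega
      have hBcard : (Finset.univ.filter fun x => γ x = β x).card = b := by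
        have := Finset.card_filter_add_card_filter_not
          (s := (Finset.univ : Finset (Fin k))) (p := fun x => γ x ≠ β x)
        simp only [not_not, Finset.card_univ, Fintype.card_fin] at this
        omega
      rw [hT, Finset.mem_sigma]
      constructor
      · rw [Finset.mem_powersetCard_univ]; exact hCcard
      · rw [Finset.mem_powersetCard]
        refine ⟨?_, hBcard⟩
        intro x hx
        rw [Finset.mem_filter] at hx
        rw [Finset.mem_compl, Finset.mem_filter]
        push_neg
        intro _ _
        exact hx.2
    rw [Finset.card_eq_sum_card_fiberwise hmem]
    have hfiber : ∀ p ∈ T, (S.filter fun γ => f γ = p).card =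
        (Fintype.card A - 2) ^ c := by
      intro p hp
      obtain ⟨C, B⟩ := p
      rw [hT, Finset.mem_sigma, Finset.mem_powersetCard_univ, Finset.mem_powersetCard] at hp
      obtain ⟨hC, hBsub, hB⟩ := hp
      have hdisj : Disjoint C B := by
        rw [Finset.disjoint_left]
        intro x hxC hxB
        exact (Finset.mem_compl.mp (hBsub hxB)) hxC
      have hfe : (S.filter fun γ => f γ = ⟨C, B⟩) =
          Fintype.piFinset (fun x => if x ∈ C then Finset.univ \ {α x, β x}
            else if x ∈ B then {β x} else {α x}) := by
        ext γ
        rw [Finset.mem_filter, hS, Finset.mem_filter, Fintype.mem_piFinset]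
        simp only [Finset.mem_univ, true_and, hf, Sigma.ext_iff, heq_eq_eq]
        constructor
        · rintro ⟨⟨h1, h2⟩, hCe, hBe⟩
          intro x
          by_cases hxC : x ∈ C
          · simp only [hxC, if_true, Finset.mem_sdiff, Finset.mem_univ, true_and,
              Finset.mem_insert, Finset.mem_singleton]
            rw [← hCe] at hxC
            rw [Finset.mem_filter] at hxC
            push_neg
            exact hxC.2
          · by_cases hxB : x ∈ B
            · simp only [hxC, hxB, if_false, if_true, Finset.mem_singleton]
              rw [← hBe] at hxB
              rw [Finset.mem_filter] at hxB
              exact hxB.2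
            · simp only [hxC, hxB, if_false, Finset.mem_singleton]
              rw [← hCe] at hxC
              rw [← hBe] at hxB
              simp only [Finset.mem_filter, Finset.mem_univ, true_and, not_and, not_not] at hxC hxB
              by_cases h : γ x = α x
              · exact h
              · exact absurd (hxC h) hxB
        · intro hγ
          have hval : ∀ x, (x ∈ C ∧ γ x ≠ α x ∧ γ x ≠ β x) ∨
              (x ∉ C ∧ x ∈ B ∧ γ x = β x) ∨ (x ∉ C ∧ x ∉ B ∧ γ x = α x) := by
            intro x
            have := hγ x
            by_cases hxC : x ∈ C
            · simp only [hxC, if_true, Finset.mem_sdiff, Finset.mem_univ, true_and,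
                Finset.mem_insert, Finset.mem_singleton] at this
              push_neg at this
              exact Or.inl ⟨hxC, this⟩
            · by_cases hxB : x ∈ B
              · simp only [hxC, hxB, if_false, if_true, Finset.mem_singleton] at this
                exact Or.inr (Or.inl ⟨hxC, hxB, this⟩)
              · simp only [hxC, hxB, if_false, Finset.mem_singleton] at this
                exact Or.inr (Or.inr ⟨hxC, hxB, this⟩)
          have hCe : (Finset.univ.filter fun x => γ x ≠ α x ∧ γ x ≠ β x) = C := by
            ext x
            simp only [Finset.mem_filter, Finset.mem_univ, true_and]
            rcases hval x with ⟨h1, h2⟩ | ⟨h1, _, h3⟩ | ⟨h1, _, h3⟩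
            · exact ⟨fun _ => h1, fun _ => h2⟩
            · constructor
              · intro h; exact absurd h3 h.2
              · intro h; exact absurd h h1
            · constructor
              · intro h; exact absurd h3 h.1
              · intro h; exact absurd h h1
          have hBe : (Finset.univ.filter fun x => γ x = β x) = B := by
            ext x
            simp only [Finset.mem_filter, Finset.mem_univ, true_and]
            rcases hval x with ⟨h1, h2, h3⟩ | ⟨h1, h2, h3⟩ | ⟨h1, h2, h3⟩
            · exact ⟨fun h => absurd h h3, fun h => (hdisj.forall_ne_finset h1 h rfl).elim⟩
            · exact ⟨fun _ => h2, fun _ => h3⟩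
            · constructor
              · intro h; rw [h3] at h; exact absurd h (hne x)
              · intro h; exact absurd h h2
          have hαγ : (Finset.univ.filter fun x => α x ≠ γ x) = C ∪ B := by
            ext x
            simp only [Finset.mem_filter, Finset.mem_univ, true_and, Finset.mem_union]
            rcases hval x with ⟨h1, h2, _⟩ | ⟨_, h2, h3⟩ | ⟨h1, h2, h3⟩
            · exact ⟨fun _ => Or.inl h1, fun _ => fun h => h2 h.symm⟩
            · refine ⟨fun _ => Or.inr h2, fun _ h => ?_⟩
              rw [h3] at h; exact hne x h
            · constructor
              · intro h; exact absurd h3.symm h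
              · rintro (h | h)
                · exact absurd h h1
                · exact absurd h h2
          have hβγ : (Finset.univ.filter fun x => β x ≠ γ x) = Bᶜ := by
            ext x
            simp only [Finset.mem_filter, Finset.mem_univ, true_and, Finset.mem_compl]
            rcases hval x with ⟨h1, h2, h3⟩ | ⟨_, h2, h3⟩ | ⟨h1, h2, h3⟩
            · exact ⟨fun _ => fun h => (hdisj.forall_ne_finset h1 h) rfl,
                fun _ => fun h => h3 h.symm⟩
            · constructor
              · intro h; exact absurd h3.symm h
              · intro h; exact absurd h2 h
            · refine ⟨fun _ => h2, fun _ h => ?_⟩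
              rw [h3] at h; exact hne x h.symm
          refine ⟨⟨?_, ?_⟩, hCe, hBe⟩
          · rw [hammingDist]
            have : ({x | α x ≠ γ x} : Finset (Fin k)) =
                Finset.univ.filter fun x => α x ≠ γ x := rfl
            rw [this, hαγ, Finset.card_union_of_disjoint hdisj, hC, hB]
            omega
          · rw [hammingDist]
            have : ({x | β x ≠ γ x} : Finset (Fin k)) =
                Finset.univ.filter fun x => β x ≠ γ x := rfl
            rw [this, hβγ, Finset.card_compl, Fintype.card_fin, hB]
            omega
      rw [hfe, Fintype.card_piFinset]
      rw [← Finset.prod_mul_prod_compl C]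
      have e1 : ∀ x ∈ C, (if x ∈ C then Finset.univ \ {α x, β x}
          else if x ∈ B then ({β x} : Finset A) else {α x}).card = Fintype.card A - 2 := by
        intro x hx
        rw [if_pos hx, Finset.card_sdiff_of_subset (Finset.subset_univ _), Finset.card_univ,
          Finset.card_pair (hne x)]
      have e2 : ∀ x ∈ Cᶜ, (if x ∈ C then Finset.univ \ {α x, β x}
          else if x ∈ B then ({β x} : Finset A) else {α x}).card = 1 := by
        intro x hx
        rw [Finset.mem_compl] at hx
        rw [if_neg hx]
        by_cases h : x ∈ B
        · rw [if_pos h, Finset.card_singleton]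
        · rw [if_neg h, Finset.card_singleton]
      rw [Finset.prod_congr rfl e1, Finset.prod_congr rfl e2, Finset.prod_const,
        Finset.prod_const, hC, one_pow, mul_one]
    rw [Finset.sum_congr rfl hfiber, Finset.sum_const, hT, Finset.card_sigma]
    have e3 : ∀ C ∈ (Finset.univ : Finset (Fin k)).powersetCard c, (Cᶜ.powersetCard b).card =
        (2 * k - i - j).choose (k - j) := by
      intro C hC
      rw [Finset.mem_powersetCard_univ] at hC
      rw [Finset.card_powersetCard, Finset.card_compl, Fintype.card_fin, hC]
      congr 1
      omega
    rw [Finset.sum_congr rfl e3, Finset.sum_const, Finset.card_powersetCard,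
      Finset.card_univ, Fintype.card_fin, smul_eq_mul, smul_eq_mul]
    ring
  · intro hlt
    rw [Finset.card_eq_zero, Finset.eq_empty_iff_forall_notMem]
    intro γ hγ
    rw [Finset.mem_filter] at hγ
    exact absurd (key γ hγ.2.1 hγ.2.2) (by omega)
end

section
/- The size of the intersection of m-mismatch neighborhoods, |N_{k,m}(α) ∩ N_{k,m}(β)|, depends only on k, m, |Σ|, and the Hamming distance d(α,β); i.e., if α, β, α', β' ∈ Σ^k satisfy d(α,β) = d(α',β'), then |N_{k,m}(α) ∩ N_{k,m}(β)| = |N_{k,m}(α') ∩ N_{k,m}(β')|. -/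
lemma exists_perm_pair {A : Type*} [DecidableEq A] (a b a' b' : A)
    (h : (a = b) ↔ (a' = b')) : ∃ π : Equiv.Perm A, π a = a' ∧ π b = b' := by
  by_cases hab : a = b
  · refine ⟨Equiv.swap a a', ?_, ?_⟩
    · simp
    · rw [← hab, Equiv.swap_apply_left, h.mp hab]
  · have hab' : a' ≠ b' := fun hh => hab (h.mpr hh)
    refine ⟨(Equiv.swap a a').trans (Equiv.swap (Equiv.swap a a' b) b'), ?_, ?_⟩
    · simp only [Equiv.trans_apply, Equiv.swap_apply_left]
      apply Equiv.swap_apply_of_ne_of_ne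
      · intro hh
        have := (Equiv.swap a a').injective (by rw [Equiv.swap_apply_left, ← hh] :
          Equiv.swap a a' a = Equiv.swap a a' b)
        exact hab this
      · exact hab'
    · simp [Equiv.trans_apply]

lemma exists_perm_fin {k : ℕ} {p q : Fin k → Prop} [DecidablePred p] [DecidablePred q]
    (h : Fintype.card {i // p i} = Fintype.card {i // q i}) :
    ∃ σ : Equiv.Perm (Fin k), ∀ i, q (σ i) ↔ p i := by
  have h2 : Fintype.card {i // ¬ p i} = Fintype.card {i // ¬ q i} := by
    have := Fintype.card_subtype_compl p
    have := Fintype.card_subtype_compl q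
    omega
  let e : {i // p i} ≃ {i // q i} := Fintype.equivOfCardEq h
  let f : {i // ¬ p i} ≃ {i // ¬ q i} := Fintype.equivOfCardEq h2
  refine ⟨Equiv.subtypeCongr e f, fun i => ?_⟩
  by_cases hp : p i
  · rw [show (Equiv.subtypeCongr e f) i = e ⟨i, hp⟩ by
      simp [Equiv.subtypeCongr, Equiv.sumCompl_symm_apply_of_pos hp]]
    exact iff_of_true (e ⟨i, hp⟩).2 hp
  · rw [show (Equiv.subtypeCongr e f) i = f ⟨i, hp⟩ by
      simp [Equiv.subtypeCongr, Equiv.sumCompl_symm_apply_of_neg hp]]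
    exact iff_of_false (f ⟨i, hp⟩).2 hp

lemma hammingDist_transform {k : ℕ} {A : Type*} [DecidableEq A]
    (σ : Equiv.Perm (Fin k)) (π : Fin k → Equiv.Perm A) (x y : Fin k → A) :
    hammingDist (fun i => π i (x (σ.symm i))) (fun i => π i (y (σ.symm i))) =
      hammingDist x y := by
  simp only [hammingDist]
  apply Finset.card_bij' (fun i _ => σ.symm i) (fun j _ => σ j)
  · intro i hi
    simp only [Finset.mem_filter, Finset.mem_univ, true_and] at hi ⊢
    exact fun hh => hi (by rw [hh])
  · intro j hj
    simp only [Finset.mem_filter, Finset.mem_univ, true_and, Equiv.symm_apply_apply] at hj ⊢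
    exact fun hh => hj ((π (σ j)).injective hh)
  · intro i _; simp
  · intro j _; simp

theorem intersection_size_depends_only_on_distance
    {k m : ℕ} {A : Type*} [Fintype A] [DecidableEq A]
    (α β α' β' : Fin k → A) (h : hammingDist α β = hammingDist α' β') :
    ((Finset.univ.filter (fun γ : Fin k → A => hammingDist α γ ≤ m)) ∩
        (Finset.univ.filter (fun γ : Fin k → A => hammingDist β γ ≤ m))).card =
      ((Finset.univ.filter (fun γ : Fin k → A => hammingDist α' γ ≤ m)) ∩
        (Finset.univ.filter (fun γ : Fin k → A => hammingDist β' γ ≤ m))).card := by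
  classical
  obtain ⟨σ, hσ⟩ := exists_perm_fin (p := fun i => α i ≠ β i) (q := fun i => α' i ≠ β' i)
    (by
      show Fintype.card {i // α i ≠ β i} = Fintype.card {i // α' i ≠ β' i}
      have e1 : Fintype.card {i // α i ≠ β i} = hammingDist α β := by
        simp [hammingDist, Fintype.card_subtype]
      have e2 : Fintype.card {i // α' i ≠ β' i} = hammingDist α' β' := by
        simp [hammingDist, Fintype.card_subtype]
      omega)
  -- hσ : ∀ i, (α (σ i) ≠ β (σ i)) ↔ (α' i ≠ β' i)
  choose π hπ1 hπ2 using fun i => exists_perm_pair (α (σ.symm i)) (β (σ.symm i)) (α' i) (β' i)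
    (by
      have := hσ (σ.symm i)
      rw [Equiv.apply_symm_apply] at this
      exact not_iff_not.mp this.symm)
  set F : (Fin k → A) → (Fin k → A) := fun γ i => π i (γ (σ.symm i)) with hF
  have hFα : F α = α' := funext fun i => hπ1 i
  have hFβ : F β = β' := funext fun i => hπ2 i
  have hd : ∀ x γ : Fin k → A, hammingDist (F x) (F γ) = hammingDist x γ := fun x γ =>
    hammingDist_transform σ π x γ
  apply Finset.card_bij' (fun γ _ => F γ) (fun γ' _ => fun j => (π (σ j)).symm (γ' (σ j)))
  · intro γ hγ
    simp only [Finset.mem_inter, Finset.mem_filter, Finset.mem_univ, true_and] at hγ ⊢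
    rw [← hFα, ← hFβ, hd, hd]
    exact hγ
  · intro γ' hγ'
    simp only [Finset.mem_inter, Finset.mem_filter, Finset.mem_univ, true_and] at hγ' ⊢
    have h1 : F (fun j => (π (σ j)).symm (γ' (σ j))) = γ' := by
      funext i
      simp [hF, Equiv.apply_symm_apply]
    have e1 : hammingDist α (fun j => (π (σ j)).symm (γ' (σ j))) = hammingDist α' γ' := by
      rw [← hd α, hFα, h1]
    have e2 : hammingDist β (fun j => (π (σ j)).symm (γ' (σ j))) = hammingDist β' γ' := by
      rw [← hd β, hFβ, h1]
    rw [e1, e2]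
    exact hγ'
  · intro γ _
    funext j
    simp [hF, Equiv.symm_apply_apply]
  · intro γ' _
    funext i
    simp [hF, Equiv.apply_symm_apply]
end

section
/- For strings α, β ∈ Σ^k at Hamming distance d with |Σ| = s ≥ 2, the intersection size I_d = |N_{k,m}(α) ∩ N_{k,m}(β)| equals Σ_{q=0}^{m} Σ_{r=0}^{m} Σ_{t=0}^{⌊(q+r−d)/2⌋} C(2d−q−r+2t, d−(q−t)) · C(d, q+r−2t−d) · (s−2)^{q+r−2t−d} · C(k−d, t) · (s−1)^t. -/
open Finset

/-- Binomial coefficient with integer arguments; 0 when out of range. -/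
def zchoose (n r : ℤ) : ℕ := if 0 ≤ r ∧ r ≤ n then Nat.choose n.toNat r.toNat else 0

/-- Power with integer exponent; 0 when the exponent is negative. -/
def zpow' (b : ℕ) (e : ℤ) : ℕ := if 0 ≤ e then b ^ e.toNat else 0


lemma count_pi {k : ℕ} {A : Type*} [Fintype A] [DecidableEq A] (s : Fin k → Finset A) :
    (univ.filter fun γ : Fin k → A => ∀ i, γ i ∈ s i).card = ∏ i, (s i).card := by
  rw [← Fintype.card_piFinset]
  congr 1; ext γ; simp [Fintype.mem_piFinset]

lemma inner_count {k : ℕ} {A : Type*} [Fintype A] [DecidableEq A]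
    (hs : 2 ≤ Fintype.card A)
    (α β : Fin k → A) (D : Finset (Fin k)) (hD : D = univ.filter fun i => α i ≠ β i)
    (SA SB T : Finset (Fin k)) (hSA : SA ⊆ D) (hSB : SB ⊆ D) (hdisj : Disjoint SA SB)
    (hT : T ⊆ Dᶜ) :
    (univ.filter fun γ : Fin k → A =>
        D.filter (fun i => α i = γ i) = SA ∧ D.filter (fun i => β i = γ i) = SB ∧
        Dᶜ.filter (fun i => α i ≠ γ i) = T).card
      = (Fintype.card A - 2) ^ (D.card - SA.card - SB.card) * (Fintype.card A - 1) ^ T.card := by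
  classical
  have hDne : ∀ i ∈ D, α i ≠ β i := by intro i hi; rw [hD] at hi; simpa using hi
  have hSAB : ∀ i ∈ SA, i ∉ SB := fun i h1 h2 => (Finset.disjoint_left.mp hdisj) h1 h2
  have hTD : ∀ i ∈ T, i ∉ D := fun i h1 => Finset.mem_compl.mp (hT h1)
  set s : Fin k → Finset A := fun i =>
    if i ∈ SA then {α i} else if i ∈ SB then {β i} else if i ∈ D then {α i, β i}ᶜ
      else if i ∈ T then {α i}ᶜ else {α i} with hsdef
  have key : (univ.filter fun γ : Fin k → A =>
        D.filter (fun i => α i = γ i) = SA ∧ D.filter (fun i => β i = γ i) = SB ∧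
        Dᶜ.filter (fun i => α i ≠ γ i) = T)
      = univ.filter fun γ : Fin k → A => ∀ i, γ i ∈ s i := by
    ext γ
    simp only [mem_filter, mem_univ, true_and]
    constructor
    · rintro ⟨hA, hB, hT'⟩ i
      by_cases h1 : i ∈ SA
      · have : i ∈ D.filter (fun i => α i = γ i) := hA ▸ h1
        simp only [mem_filter] at this
        simp [hsdef, h1, this.2.symm]
      · by_cases h2 : i ∈ SB
        · have : i ∈ D.filter (fun i => β i = γ i) := hB ▸ h2
          simp only [mem_filter] at this
          simp [hsdef, h1, h2, this.2.symm]
        · by_cases h3 : i ∈ D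
          · have e1 : α i ≠ γ i := fun h => h1 (hA ▸ (mem_filter.mpr ⟨h3, h⟩))
            have e2 : β i ≠ γ i := fun h => h2 (hB ▸ (mem_filter.mpr ⟨h3, h⟩))
            simp [hsdef, h1, h2, h3, Ne.symm e1, Ne.symm e2]
          · by_cases h4 : i ∈ T
            · have : i ∈ Dᶜ.filter (fun i => α i ≠ γ i) := hT' ▸ h4
              simp only [mem_filter] at this
              simp [hsdef, h1, h2, h3, h4, Ne.symm this.2]
            · have : i ∉ Dᶜ.filter (fun i => α i ≠ γ i) := hT' ▸ h4
              simp only [mem_filter, Finset.mem_compl, not_and, not_not] at this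
              simp [hsdef, h1, h2, h3, h4, (this (by simpa using h3)).symm]
    · intro h
      have hvSA : ∀ i ∈ SA, γ i = α i := by
        intro i h1; have hi := h i; simp [hsdef, h1] at hi; exact hi
      have hvSB : ∀ i ∈ SB, γ i = β i := by
        intro i h2
        have h1 : i ∉ SA := fun h1 => hSAB i h1 h2
        have hi := h i; simp [hsdef, h1, h2] at hi; exact hi
      have hvD : ∀ i ∈ D, i ∉ SA → i ∉ SB → γ i ≠ α i ∧ γ i ≠ β i := by
        intro i h3 h1 h2; have hi := h i; simp [hsdef, h1, h2, h3] at hi; exact hi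
      have hvT : ∀ i ∈ T, γ i ≠ α i := by
        intro i h4
        have h3 : i ∉ D := hTD i h4
        have h1 : i ∉ SA := fun h1 => h3 (hSA h1)
        have h2 : i ∉ SB := fun h2 => h3 (hSB h2)
        have hi := h i; simp [hsdef, h1, h2, h3, h4] at hi; exact hi
      have hvE : ∀ i, i ∉ D → i ∉ T → γ i = α i := by
        intro i h3 h4
        have h1 : i ∉ SA := fun h1 => h3 (hSA h1)
        have h2 : i ∉ SB := fun h2 => h3 (hSB h2)
        have hi := h i; simp [hsdef, h1, h2, h3, h4] at hi; exact hi
      refine ⟨?_, ?_, ?_⟩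
      · ext i; simp only [mem_filter]
        constructor
        · rintro ⟨hiD, heq⟩
          by_contra h1
          by_cases h2 : i ∈ SB
          · exact hDne i hiD (heq.trans (hvSB i h2))
          · exact (hvD i hiD h1 h2).1 heq.symm
        · intro h1; exact ⟨hSA h1, (hvSA i h1).symm⟩
      · ext i; simp only [mem_filter]
        constructor
        · rintro ⟨hiD, heq⟩
          by_contra h2
          by_cases h1 : i ∈ SA
          · exact hDne i hiD ((hvSA i h1).symm.trans heq.symm)
          · exact (hvD i hiD h1 h2).2 heq.symm
        · intro h2; exact ⟨hSB h2, (hvSB i h2).symm⟩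
      · ext i; simp only [mem_filter, Finset.mem_compl]
        constructor
        · rintro ⟨hiD, hne⟩
          by_contra h4
          exact hne (hvE i hiD h4).symm
        · intro h4; exact ⟨hTD i h4, fun h => (hvT i h4) h.symm⟩
  rw [key, count_pi]
  have hcard : ∀ i, (s i).card = (if i ∈ D \ (SA ∪ SB) then Fintype.card A - 2 else 1) *
      (if i ∈ T then Fintype.card A - 1 else 1) := by
    intro i
    by_cases h1 : i ∈ SA
    · have h3 := hSA h1
      have h4 : i ∉ T := fun h4 => hTD i h4 h3
      simp [hsdef, h1, h4]
    · by_cases h2 : i ∈ SB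
      · have h3 := hSB h2
        have h4 : i ∉ T := fun h4 => hTD i h4 h3
        simp [hsdef, h1, h2, h4, Finset.mem_sdiff, Finset.mem_union]
      · by_cases h3 : i ∈ D
        · have h4 : i ∉ T := fun h4 => hTD i h4 h3
          have h5 : ({α i, β i}ᶜ : Finset A).card = Fintype.card A - 2 := by
            rw [Finset.card_compl, Finset.card_pair (hDne i h3)]
          simp [hsdef, h1, h2, h3, h4, Finset.mem_sdiff, Finset.mem_union, h5, -Finset.compl_insert]
        · by_cases h4 : i ∈ T
          · simp [hsdef, h1, h2, h3, h4, Finset.card_compl]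
          · simp [hsdef, h1, h2, h3, h4]
  calc ∏ i, (s i).card
      = ∏ i, ((if i ∈ D \ (SA ∪ SB) then Fintype.card A - 2 else 1) *
        (if i ∈ T then Fintype.card A - 1 else 1)) := by
        exact Finset.prod_congr rfl fun i _ => hcard i
    _ = (∏ i, (if i ∈ D \ (SA ∪ SB) then Fintype.card A - 2 else 1)) *
        (∏ i, (if i ∈ T then Fintype.card A - 1 else 1)) := Finset.prod_mul_distrib
    _ = (Fintype.card A - 2) ^ (D.card - SA.card - SB.card) *
        (Fintype.card A - 1) ^ T.card := by
        rw [Finset.prod_ite_mem, Finset.prod_ite_mem, univ_inter, univ_inter,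
          Finset.prod_const, Finset.prod_const]
        congr 2
        rw [card_sdiff_of_subset (by
          intro i hi
          rcases Finset.mem_union.mp hi with h | h
          exacts [hSA h, hSB h]), card_union_of_disjoint hdisj]
        omega


section
variable {k : ℕ} {A : Type*} [Fintype A] [DecidableEq A]

lemma dist_split (α β : Fin k → A) (D : Finset (Fin k))
    (hD : D = univ.filter fun i => α i ≠ β i) (γ : Fin k → A) :
    hammingDist α γ = (D.card - (D.filter fun i => α i = γ i).card) +
        (Dᶜ.filter fun i => α i ≠ γ i).card ∧
      hammingDist β γ = (D.card - (D.filter fun i => β i = γ i).card) +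
        (Dᶜ.filter fun i => α i ≠ γ i).card ∧
      (D.filter fun i => α i = γ i).card ≤ D.card ∧
      (D.filter fun i => β i = γ i).card ≤ D.card := by
  classical
  have hDc : ∀ i ∈ Dᶜ, α i = β i := by
    intro i hi; rw [hD] at hi
    have := Finset.mem_compl.mp hi; simpa using this
  have hsplit : ∀ (x : Fin k → A), hammingDist x γ =
      (D.filter fun i => x i ≠ γ i).card + (Dᶜ.filter fun i => x i ≠ γ i).card := by
    intro x
    have h1 : hammingDist x γ = (univ.filter fun i => x i ≠ γ i).card := rfl
    rw [h1, ← Finset.union_compl D, Finset.filter_union,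
      Finset.card_union_of_disjoint (Finset.disjoint_filter_filter disjoint_compl_right)]
  have hneg : ∀ (x : Fin k → A), (D.filter fun i => x i ≠ γ i).card =
      D.card - (D.filter fun i => x i = γ i).card := by
    intro x
    have := Finset.card_filter_add_card_filter_not (s := D) (p := fun i => x i = γ i)
    simp only [ne_eq]
    omega
  have htail : (Dᶜ.filter fun i => β i ≠ γ i) = (Dᶜ.filter fun i => α i ≠ γ i) := by
    apply Finset.filter_congr; intro i hi; rw [hDc i hi]
  refine ⟨?_, ?_, Finset.card_filter_le _ _, Finset.card_filter_le _ _⟩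
  · rw [hsplit α, hneg α]
  · rw [hsplit β, hneg β, htail]

lemma count_qrt (hs : 2 ≤ Fintype.card A)
    (α β : Fin k → A) (D : Finset (Fin k)) (hD : D = univ.filter fun i => α i ≠ β i)
    (d q r t a b : ℕ) (hDcard : D.card = d)
    (hab : a + b ≤ d) (hq : q = (d - a) + t) (hr : r = (d - b) + t)
    (ha : a ≤ d) (hb : b ≤ d) (ht : t ≤ k - d) :
    (univ.filter fun γ : Fin k → A => hammingDist α γ = q ∧ hammingDist β γ = r ∧
        (Dᶜ.filter fun i => α i ≠ γ i).card = t).card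
      = d.choose a * (d - a).choose b * (k - d).choose t *
        ((Fintype.card A - 2) ^ (d - a - b) * (Fintype.card A - 1) ^ t) := by
  classical
  have hkd : d ≤ k := by
    rw [← hDcard]; simpa using Finset.card_le_card (Finset.subset_univ D)
  have hDccard : Dᶜ.card = k - d := by
    rw [Finset.card_compl, hDcard]; simp
  have hDne : ∀ i ∈ D, α i ≠ β i := by intro i hi; rw [hD] at hi; simpa using hi
  set G : Finset (Finset (Fin k) × Finset (Fin k)) :=
    ((D.powersetCard a) ×ˢ (D.powersetCard b)).filter fun p => Disjoint p.1 p.2 with hG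
  set F : Finset ((Finset (Fin k) × Finset (Fin k)) × Finset (Fin k)) :=
    G ×ˢ (Dᶜ.powersetCard t) with hF
  rw [Finset.card_eq_sum_card_fiberwise
    (f := fun γ : Fin k → A => ((D.filter fun i => α i = γ i, D.filter fun i => β i = γ i),
      Dᶜ.filter fun i => α i ≠ γ i)) (t := F) ?hmem]
  case hmem =>
    intro γ hγ
    simp only [Finset.mem_coe, mem_filter, mem_univ, true_and] at hγ
    obtain ⟨hq', hr', ht'⟩ := hγ
    obtain ⟨e1, e2, e3, e4⟩ := dist_split α β D hD γ
    rw [e1, hDcard, ht'] at hq'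
    rw [e2, hDcard, ht'] at hr'
    have haγ : (D.filter fun i => α i = γ i).card = a := by omega
    have hbγ : (D.filter fun i => β i = γ i).card = b := by omega
    simp only [Finset.mem_coe, hF, hG, Finset.mem_product, Finset.mem_filter, Finset.mem_powersetCard]
    refine ⟨⟨⟨⟨Finset.filter_subset _ _, haγ⟩, ⟨Finset.filter_subset _ _, hbγ⟩⟩, ?_⟩,
      Finset.filter_subset _ _, ht'⟩
    refine Finset.disjoint_left.mpr ?_
    intro i hi1 hi2
    simp only [Finset.mem_filter] at hi1 hi2
    exact hDne i hi1.1 (hi1.2.trans hi2.2.symm)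
  have hfiber : ∀ p ∈ F,
      (((univ.filter fun γ : Fin k → A => hammingDist α γ = q ∧ hammingDist β γ = r ∧
        (Dᶜ.filter fun i => α i ≠ γ i).card = t)).filter
        (fun γ : Fin k → A => ((D.filter fun i => α i = γ i, D.filter fun i => β i = γ i),
          Dᶜ.filter fun i => α i ≠ γ i) = p)).card
      = (Fintype.card A - 2) ^ (d - a - b) * (Fintype.card A - 1) ^ t := by
    intro p hp
    simp only [hF, hG, Finset.mem_product, Finset.mem_filter, Finset.mem_powersetCard] at hp
    obtain ⟨⟨⟨⟨hp1, hp1c⟩, hp2, hp2c⟩, hpd⟩, hp3, hp3c⟩ := hp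
    have hset : ((univ.filter fun γ : Fin k → A => hammingDist α γ = q ∧ hammingDist β γ = r ∧
        (Dᶜ.filter fun i => α i ≠ γ i).card = t)).filter
        (fun γ : Fin k → A => ((D.filter fun i => α i = γ i, D.filter fun i => β i = γ i),
          Dᶜ.filter fun i => α i ≠ γ i) = p)
        = univ.filter fun γ : Fin k → A =>
            D.filter (fun i => α i = γ i) = p.1.1 ∧ D.filter (fun i => β i = γ i) = p.1.2 ∧
            Dᶜ.filter (fun i => α i ≠ γ i) = p.2 := by
      ext γ
      simp only [Finset.mem_filter, mem_univ, true_and, Prod.ext_iff]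
      constructor
      · rintro ⟨-, ⟨h1, h2⟩, h3⟩
        exact ⟨h1, h2, h3⟩
      · rintro ⟨h1, h2, h3⟩
        obtain ⟨e1, e2, -, -⟩ := dist_split α β D hD γ
        rw [e1, e2, h1, h2, h3, hDcard, hp1c, hp2c, hp3c]
        exact ⟨⟨by omega, by omega, rfl⟩, ⟨rfl, rfl⟩, rfl⟩
    rw [hset, inner_count hs α β D hD p.1.1 p.1.2 p.2 hp1 hp2 hpd hp3,
      hDcard, hp1c, hp2c, hp3c]
  rw [Finset.sum_congr rfl hfiber, Finset.sum_const, smul_eq_mul]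
  congr 1
  have hGcard : G.card = d.choose a * (d - a).choose b := by
    rw [Finset.card_eq_sum_card_fiberwise (f := Prod.fst) (t := D.powersetCard a)
      (by
        intro p hp
        simp only [hG, Finset.mem_coe, Finset.mem_filter, Finset.mem_product] at hp
        exact hp.1.1)]
    have hGfib : ∀ SA ∈ D.powersetCard a,
        (G.filter fun p => p.1 = SA).card = (d - a).choose b := by
      intro SA hSA
      rw [Finset.mem_powersetCard] at hSA
      have : G.filter (fun p => p.1 = SA) = {SA} ×ˢ ((D \ SA).powersetCard b) := by
        ext p
        simp only [hG, Finset.mem_filter, Finset.mem_product, Finset.mem_powersetCard,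
          Finset.mem_singleton, Finset.subset_sdiff]
        constructor
        · rintro ⟨⟨⟨-, ⟨h2, h2c⟩⟩, hd'⟩, h1⟩
          exact ⟨h1, ⟨h2, by rw [h1] at hd'; exact hd'.symm⟩, h2c⟩
        · rintro ⟨h1, ⟨h2, hdisj'⟩, h2c⟩
          exact ⟨⟨⟨by rw [h1]; exact ⟨hSA.1, hSA.2⟩, h2, h2c⟩, by rw [h1]; exact hdisj'.symm⟩, h1⟩
      rw [this, Finset.card_product, Finset.card_singleton, Finset.card_powersetCard,
        Finset.card_sdiff_of_subset hSA.1, hDcard, hSA.2, one_mul]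
    rw [Finset.sum_congr rfl hGfib, Finset.sum_const, smul_eq_mul,
      Finset.card_powersetCard, hDcard]
  rw [hF, Finset.card_product, hGcard, Finset.card_powersetCard, hDccard]
end
lemma zchoose_coe (n r : ℕ) (h : r ≤ n) : zchoose (n : ℤ) (r : ℤ) = n.choose r := by
  rw [zchoose, if_pos ⟨Int.natCast_nonneg r, Int.ofNat_le.mpr h⟩]
  simp

lemma zpow'_coe (b e : ℕ) : zpow' b (e : ℤ) = b ^ e := by
  rw [zpow', if_pos (Int.natCast_nonneg e)]
  simp

theorem intersection_size_closed_form
    {k m : ℕ} {A : Type*} [Fintype A] [DecidableEq A]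
    (hs : 2 ≤ Fintype.card A) (α β : Fin k → A) (d : ℕ) (hd : hammingDist α β = d) :
    ((Finset.univ.filter (fun γ : Fin k → A => hammingDist α γ ≤ m)) ∩
        (Finset.univ.filter (fun γ : Fin k → A => hammingDist β γ ≤ m))).card =
      ∑ q ∈ Finset.range (m + 1), ∑ r ∈ Finset.range (m + 1),
        ∑ t ∈ Finset.range ((((q : ℤ) + r - d) / 2 + 1).toNat),
          zchoose (2 * (d : ℤ) - q - r + 2 * t) ((d : ℤ) - ((q : ℤ) - t)) *
            zchoose (d : ℤ) ((q : ℤ) + r - 2 * t - d) *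
            zpow' (Fintype.card A - 2) ((q : ℤ) + r - 2 * t - d) *
            zchoose ((k : ℤ) - d) (t : ℤ) *
            zpow' (Fintype.card A - 1) (t : ℤ) := by
  classical
  set D : Finset (Fin k) := univ.filter (fun i => α i ≠ β i) with hD
  have hDcard : D.card = d := hd
  have hkd : d ≤ k := by
    rw [← hDcard]; simpa using Finset.card_le_card (Finset.subset_univ D)
  have hDccard : Dᶜ.card = k - d := by
    rw [Finset.card_compl, hDcard]; simp
  -- basic facts for any γ in a fiber
  have hbasic : ∀ γ : Fin k → A, ∀ q r : ℕ, hammingDist α γ = q → hammingDist β γ = r →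
      q ≤ d + (Dᶜ.filter fun i => α i ≠ γ i).card ∧
      r ≤ d + (Dᶜ.filter fun i => α i ≠ γ i).card ∧
      d + 2 * (Dᶜ.filter fun i => α i ≠ γ i).card ≤ q + r ∧
      (Dᶜ.filter fun i => α i ≠ γ i).card ≤ k - d := by
    intro γ q r hq hr
    obtain ⟨e1, e2, e3, e4⟩ := dist_split α β D hD γ
    have hsum : (D.filter fun i => α i = γ i).card + (D.filter fun i => β i = γ i).card ≤ d := by
      rw [← hDcard]
      rw [← Finset.card_union_of_disjoint (by
        refine Finset.disjoint_left.mpr ?_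
        intro i hi1 hi2
        simp only [Finset.mem_filter] at hi1 hi2
        have : α i ≠ β i := by
          have := hi1.1; rw [hD] at this; simpa using this
        exact this (hi1.2.trans hi2.2.symm))]
      exact Finset.card_le_card (by
        intro i hi
        rcases Finset.mem_union.mp hi with h | h
        exacts [(Finset.mem_filter.mp h).1, (Finset.mem_filter.mp h).1])
    have htle : (Dᶜ.filter fun i => α i ≠ γ i).card ≤ k - d := by
      rw [← hDccard]; exact Finset.card_filter_le _ _
    rw [e1, hDcard] at hq
    rw [e2, hDcard] at hr
    rw [hDcard] at e3 e4
    omega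
  rw [← Finset.filter_and]
  rw [Finset.card_eq_sum_card_fiberwise
    (f := fun γ : Fin k → A => (hammingDist α γ, hammingDist β γ))
    (t := Finset.range (m + 1) ×ˢ Finset.range (m + 1))
    (by
      intro γ hγ
      simp only [Finset.mem_coe, Finset.mem_filter, Finset.mem_univ, true_and] at hγ
      simp only [Finset.mem_coe, Finset.mem_product, Finset.mem_range]
      omega)]
  rw [Finset.sum_product]
  refine Finset.sum_congr rfl fun q hq => Finset.sum_congr rfl fun r hr => ?_
  rw [Finset.mem_range] at hq hr
  have hqr : (Finset.univ.filter fun γ : Fin k → A =>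
      hammingDist α γ ≤ m ∧ hammingDist β γ ≤ m).filter
      (fun γ => (hammingDist α γ, hammingDist β γ) = (q, r))
      = Finset.univ.filter fun γ : Fin k → A =>
        hammingDist α γ = q ∧ hammingDist β γ = r := by
    ext γ
    simp only [Finset.mem_filter, Finset.mem_univ, true_and, Prod.mk.injEq]
    constructor
    · rintro ⟨-, h1, h2⟩; exact ⟨h1, h2⟩
    · rintro ⟨h1, h2⟩; exact ⟨⟨by omega, by omega⟩, h1, h2⟩
  rw [hqr]
  rw [Finset.card_eq_sum_card_fiberwise
    (f := fun γ : Fin k → A => (Dᶜ.filter fun i => α i ≠ γ i).card)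
    (t := Finset.range ((((q : ℤ) + r - d) / 2 + 1).toNat))
    (by
      intro γ hγ
      simp only [Finset.mem_coe, Finset.mem_filter, Finset.mem_univ, true_and] at hγ
      obtain ⟨h1, h2, h3, h4⟩ := hbasic γ q r hγ.1 hγ.2
      simp only [Finset.mem_coe, Finset.mem_range]
      omega)]
  refine Finset.sum_congr rfl fun t ht => ?_
  rw [Finset.mem_range] at ht
  have ht2 : d + 2 * t ≤ q + r := by omega
  rw [Finset.filter_filter]
  by_cases hcase : q ≤ d + t ∧ r ≤ d + t ∧ t ≤ k - d
  · -- main case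
    obtain ⟨hc1, hc2, hc3⟩ := hcase
    set a := d + t - q with hadef
    set b := d + t - r with hbdef
    have key := count_qrt hs α β D hD d q r t a b hDcard (by omega) (by omega) (by omega)
      (by omega) (by omega) hc3
    have hfe : (Finset.univ.filter fun γ : Fin k → A =>
        (hammingDist α γ = q ∧ hammingDist β γ = r) ∧
        (Dᶜ.filter fun i => α i ≠ γ i).card = t)
        = Finset.univ.filter fun γ : Fin k → A => hammingDist α γ = q ∧
          hammingDist β γ = r ∧ (Dᶜ.filter fun i => α i ≠ γ i).card = t := by
      ext γ; simp [and_assoc]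
    rw [hfe, key]
    clear hfe key hqr hbasic
    -- now the arithmetic identity
    have e1 : (2 * (d : ℤ) - q - r + 2 * t) = ((a + b : ℕ) : ℤ) := by omega
    have e2 : ((d : ℤ) - ((q : ℤ) - t)) = ((a : ℕ) : ℤ) := by omega
    have e3 : ((q : ℤ) + r - 2 * t - d) = ((d - a - b : ℕ) : ℤ) := by omega
    have e4 : ((k : ℤ) - d) = ((k - d : ℕ) : ℤ) := by omega
    rw [e1, e2, e3, e4]
    rw [zchoose_coe (a + b) a (by omega), zchoose_coe d (d - a - b) (by omega),
      zpow'_coe, zchoose_coe (k - d) t (by omega), zpow'_coe]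
    have hch : (a + b).choose a * d.choose (d - a - b) = d.choose a * (d - a).choose b := by
      have h1 : d.choose (d - a - b) = d.choose (a + b) := by
        rw [show d - a - b = d - (a + b) from by omega, Nat.choose_symm (by omega)]
      have h2 := Nat.choose_mul (n := d) (k := a + b) (s := a) (by omega)
      rw [h1, mul_comm, h2]
      simp
    symm
    calc (a + b).choose a * d.choose (d - a - b) * (Fintype.card A - 2) ^ (d - a - b) *
          (k - d).choose t * (Fintype.card A - 1) ^ t
        = ((a + b).choose a * d.choose (d - a - b)) *
          ((k - d).choose t * ((Fintype.card A - 2) ^ (d - a - b) *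
            (Fintype.card A - 1) ^ t)) := by ring
      _ = (d.choose a * (d - a).choose b) *
          ((k - d).choose t * ((Fintype.card A - 2) ^ (d - a - b) *
            (Fintype.card A - 1) ^ t)) := by rw [hch]
      _ = d.choose a * (d - a).choose b * (k - d).choose t *
          ((Fintype.card A - 2) ^ (d - a - b) * (Fintype.card A - 1) ^ t) := by ring
  · -- degenerate case: both sides are zero
    have hempty : (Finset.univ.filter fun γ : Fin k → A =>
        (hammingDist α γ = q ∧ hammingDist β γ = r) ∧
        (Dᶜ.filter fun i => α i ≠ γ i).card = t).card = 0 := by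
      rw [Finset.card_eq_zero, Finset.filter_eq_empty_iff]
      rintro γ - ⟨⟨h1, h2⟩, h3⟩
      obtain ⟨g1, g2, g3, g4⟩ := hbasic γ q r h1 h2
      rw [h3] at g1 g2 g3 g4
      omega
    rw [hempty]
    clear hempty hqr hbasic
    rcases not_and_or.mp hcase with h | h
    · have : ¬ (0 ≤ (d : ℤ) - ((q : ℤ) - t) ∧
          (d : ℤ) - ((q : ℤ) - t) ≤ 2 * (d : ℤ) - q - r + 2 * t) := by omega
      simp only [zchoose]
      rw [if_neg this]
      simp
    rcases not_and_or.mp h with h | h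
    · have : ¬ (0 ≤ (d : ℤ) - ((q : ℤ) - t) ∧
          (d : ℤ) - ((q : ℤ) - t) ≤ 2 * (d : ℤ) - q - r + 2 * t) := by omega
      simp only [zchoose]
      rw [if_neg this]
      simp
    · have : ¬ (0 ≤ (t : ℤ) ∧ (t : ℤ) ≤ (k : ℤ) - d) := by omega
      simp only [zchoose]
      rw [if_neg this]
      simp
end
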